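/- Let S be a nonempty finite set, let P be a probability distribution on S, and suppose S is partitioned into cells such that P is constant on each cell; for x ∈ S let T(x) denote the cell containing x. Then for every ρ > 0 and every injective function G : S → {1, …, |S|}: ∑_{x∈S} P(x) G(x)^ρ ≥ (1/(1+ρ)) ∑_{x∈S} P(x) |T(x)|^ρ. -/

import Mathlib

open Finset

/-- Key step from Bernoulli: `(k+1)^(1+ρ) - k^(1+ρ) ≤ (1+ρ)*(k+1)^ρ`. -/
lemma step_ineq (ρ : ℝ) (hρ : 0 < ρ) (k : ℕ) :
    ((k + 1 : ℕ) : ℝ) ^ (1 + ρ) - (k : ℝ) ^ (1 + ρ) ≤ (1 + ρ) * ((k + 1 : ℕ) : ℝ) ^ ρ := by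
  have hk1 : (0 : ℝ) < (k + 1 : ℕ) := by positivity
  set a : ℝ := ((k + 1 : ℕ) : ℝ) with ha
  have hs : (-1 : ℝ) ≤ -1 / a := by
    rw [neg_div]
    have h1a : (1:ℝ) ≤ a := by rw [ha]; exact_mod_cast Nat.succ_le_succ (Nat.zero_le k)
    have : 1 / a ≤ 1 := by rw [div_le_one hk1]; exact h1a
    linarith
  have hbern := one_add_mul_self_le_rpow_one_add hs (p := 1 + ρ) (by linarith)
  have hpos : 0 < a := hk1
  have h1 : (1 : ℝ) + (-1 / a) = (k : ℝ) / a := by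
    field_simp [ha]
    rw [ha]; push_cast; ring
  rw [h1] at hbern
  have h2 : ((k : ℝ) / a) ^ (1 + ρ) = (k : ℝ) ^ (1 + ρ) / a ^ (1 + ρ) := by
    rw [Real.div_rpow (by positivity) hpos.le]
  rw [h2] at hbern
  have hap : 0 < a ^ (1 + ρ) := Real.rpow_pos_of_pos hpos _
  have := mul_le_mul_of_nonneg_right hbern hap.le
  rw [div_mul_cancel₀ _ hap.ne'] at this
  have hmul : (1 + (1 + ρ) * (-1 / a)) * a ^ (1 + ρ)
      = a ^ (1 + ρ) - (1 + ρ) * a ^ ρ := by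
    have hsplit : a ^ (1 + ρ) = a * a ^ ρ := Real.rpow_one_add' hpos.le (by positivity)
    field_simp
    rw [hsplit]; ring
  rw [hmul] at this
  linarith

/-- `m^(1+ρ) ≤ (1+ρ) * ∑_{k=1}^m k^ρ`. -/
lemma pow_le_sum (ρ : ℝ) (hρ : 0 < ρ) (m : ℕ) :
    (m : ℝ) ^ (1 + ρ) ≤ (1 + ρ) * ∑ k ∈ Finset.range m, ((k + 1 : ℕ) : ℝ) ^ ρ := by
  induction m with
  | zero => simp [Real.zero_rpow (by positivity : (1 : ℝ) + ρ ≠ 0)]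
  | succ n ih =>
      rw [Finset.sum_range_succ, mul_add]
      linarith [step_ineq ρ hρ n]

/-- A finset of positive naturals of cardinality `m` has `∑ a^ρ ≥ ∑_{k=1}^m k^ρ`. -/
lemma sum_rpow_ge (ρ : ℝ) (hρ : 0 < ρ) :
    ∀ (A : Finset ℕ), (0 ∉ A) →
      ∑ k ∈ Finset.range A.card, ((k + 1 : ℕ) : ℝ) ^ ρ ≤ ∑ a ∈ A, (a : ℝ) ^ ρ := by
  intro A
  induction A using Finset.strongInduction with
  | _ A ih =>
    intro h0
    rcases A.eq_empty_or_nonempty with rfl | hA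
    · simp
    · have hMmem := A.max'_mem hA
      set M := A.max' hA with hM
      have hcard : A.card ≤ M := by
        have hsub : A ⊆ Finset.Icc 1 M := by
          intro a ha
          refine Finset.mem_Icc.2 ⟨?_, A.le_max' a ha⟩
          rcases Nat.eq_zero_or_pos a with rfl | hp
          · exact absurd ha h0
          · exact hp
        simpa using Finset.card_le_card hsub
      have hcard' : (A.erase M).card = A.card - 1 := Finset.card_erase_of_mem hMmem
      have hApos : 0 < A.card := Finset.card_pos.2 hA
      have ihe := ih (A.erase M) (Finset.erase_ssubset hMmem)
        (fun h => h0 (Finset.mem_of_mem_erase h))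
      rw [← Finset.sum_erase_add A _ hMmem]
      have hcardeq : A.card = (A.erase M).card + 1 := by omega
      rw [hcardeq, Finset.sum_range_succ]
      have hlast : (((A.erase M).card + 1 : ℕ) : ℝ) ^ ρ ≤ (M : ℝ) ^ ρ := by
        apply Real.rpow_le_rpow (Nat.cast_nonneg _) _ hρ.le
        have : (A.erase M).card + 1 ≤ M := by omega
        exact_mod_cast this
      linarith

theorem converse_partition_bound {S : Type*} [Fintype S] [DecidableEq S] [Nonempty S]
    (P : S → ℝ) (hP0 : ∀ x, 0 ≤ P x) (hP1 : ∑ x : S, P x = 1)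
    (T : S → Finset S) (hmem : ∀ x, x ∈ T x) (hpart : ∀ x y, y ∈ T x → T y = T x)
    (hconst : ∀ x y, y ∈ T x → P y = P x)
    (ρ : ℝ) (hρ : 0 < ρ)
    (G : S → ℕ) (hGinj : Function.Injective G)
    (hG : ∀ x, G x ∈ Finset.Icc 1 (Fintype.card S)) :
    (1 / (1 + ρ)) * ∑ x : S, P x * ((T x).card : ℝ) ^ ρ ≤
      ∑ x : S, P x * (G x : ℝ) ^ ρ := by
  have h1ρ : (0 : ℝ) < 1 + ρ := by linarith
  -- fiberwise decomposition over cells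
  have key : ∀ x₀ : S,
      (1 / (1 + ρ)) * ∑ y ∈ T x₀, P y * ((T y).card : ℝ) ^ ρ ≤
        ∑ y ∈ T x₀, P y * (G y : ℝ) ^ ρ := by
    intro x₀
    set C := T x₀ with hC
    have hPy : ∀ y ∈ C, P y = P x₀ := fun y hy => hconst x₀ y hy
    have hTy : ∀ y ∈ C, T y = C := fun y hy => hpart x₀ y hy
    -- LHS rewrite
    have hL : ∑ y ∈ C, P y * ((T y).card : ℝ) ^ ρ = C.card * (P x₀ * (C.card : ℝ) ^ ρ) := by
      rw [Finset.sum_congr rfl (fun y hy => by rw [hPy y hy, hTy y hy])]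
      rw [Finset.sum_const, nsmul_eq_mul]
    -- RHS bound
    have hR : P x₀ * ∑ a ∈ C.image G, (a : ℝ) ^ ρ ≤ ∑ y ∈ C, P y * (G y : ℝ) ^ ρ := by
      rw [Finset.sum_image (fun a _ b _ h => hGinj h)]
      rw [Finset.mul_sum]
      apply le_of_eq
      exact Finset.sum_congr rfl (fun y hy => by rw [hPy y hy])
    have h0 : (0 : ℕ) ∉ C.image G := by
      intro h
      rcases Finset.mem_image.1 h with ⟨y, _, hy⟩
      have := (Finset.mem_Icc.1 (hG y)).1
      omega
    have hcardim : (C.image G).card = C.card :=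
      Finset.card_image_of_injective _ hGinj
    have hsum := sum_rpow_ge ρ hρ (C.image G) h0
    rw [hcardim] at hsum
    have hpow := pow_le_sum ρ hρ C.card
    have hPx0 : 0 ≤ P x₀ := hP0 x₀
    have hchain : (C.card : ℝ) ^ (1 + ρ) ≤ (1 + ρ) * ∑ a ∈ C.image G, (a : ℝ) ^ ρ := by
      calc (C.card : ℝ) ^ (1 + ρ) ≤ (1 + ρ) * ∑ k ∈ Finset.range C.card, ((k + 1 : ℕ) : ℝ) ^ ρ :=
            hpow
        _ ≤ (1 + ρ) * ∑ a ∈ C.image G, (a : ℝ) ^ ρ := by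
            exact mul_le_mul_of_nonneg_left hsum h1ρ.le
    have hsplit : (C.card : ℝ) ^ (1 + ρ) = C.card * (C.card : ℝ) ^ ρ :=
      Real.rpow_one_add' (by positivity) (by positivity)
    rw [hL]
    calc (1 / (1 + ρ)) * ((C.card : ℝ) * (P x₀ * (C.card : ℝ) ^ ρ))
        = P x₀ * ((C.card : ℝ) ^ (1 + ρ) / (1 + ρ)) := by rw [hsplit]; ring
      _ ≤ P x₀ * ∑ a ∈ C.image G, (a : ℝ) ^ ρ := by
          apply mul_le_mul_of_nonneg_left _ hPx0
          rw [div_le_iff₀ h1ρ]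
          linarith [hchain]
      _ ≤ ∑ y ∈ C, P y * (G y : ℝ) ^ ρ := hR
  -- assemble over cells
  have hfib : ∀ (g : S → ℝ),
      ∑ x : S, g x = ∑ c ∈ Finset.univ.image T, ∑ x ∈ Finset.univ.filter (fun x => T x = c), g x := by
    intro g
    rw [← Finset.sum_fiberwise_of_maps_to (fun x _ => Finset.mem_image_of_mem T (Finset.mem_univ x)) g]
  have hfilter : ∀ x₀ : S, Finset.univ.filter (fun x => T x = T x₀) = T x₀ := by
    intro x₀
    ext y
    simp only [Finset.mem_filter, Finset.mem_univ, true_and]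
    constructor
    · intro h; rw [← h]; exact hmem y
    · intro h; exact hpart x₀ y h
  rw [hfib (fun x => P x * ((T x).card : ℝ) ^ ρ), hfib (fun x => P x * (G x : ℝ) ^ ρ),
    Finset.mul_sum]
  apply Finset.sum_le_sum
  intro c hc
  rcases Finset.mem_image.1 hc with ⟨x₀, _, rfl⟩
  rw [hfilter x₀]
  exact key x₀
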